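/- Let Θ be a measurable space, G : Θ → ℝⁿ measurable, M a probability measure on Θ, α > 0, and ρ_y a probability measure on ℝⁿ with ρ_y ≪ G_# M; write q = dρ_y/d(G_# M). Assume Z := ∫ q(G(x))^{1/(1+α)} dM(x) satisfies 0 < Z < ∞, and define the probability measure ρ* on Θ by dρ*/dM = Z⁻¹ · (q ∘ G)^{1/(1+α)}. Then for every probability measure ρ on Θ, KL(G_# ρ* ‖ ρ_y) + α·KL(ρ* ‖ M) ≤ KL(G_# ρ ‖ ρ_y) + α·KL(ρ ‖ M). That is, the explicit formula dρ*/dM ∝ (dρ_y/d(G_#M) ∘ G)^{1/(1+α)} gives the minimizer of the entropy–entropy regularized inverse problem. -/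

import Mathlib

open MeasureTheory Real
open scoped ENNReal Classical

/-- The Kullback–Leibler divergence `KL(P‖Q)`: equal to `∫ log (dP/dQ) dP` when `P ≪ Q`
(and the integrand is `P`-integrable), and `+∞` otherwise. -/
noncomputable def klDiv' {X : Type*} [MeasurableSpace X] (P Q : Measure X) : EReal :=
  if P ≪ Q ∧ Integrable (fun x => Real.log ((P.rnDeriv Q x).toReal)) P
  then ((∫ x, Real.log ((P.rnDeriv Q x).toReal) ∂P : ℝ) : EReal)
  else ⊤

section Aux
variable {X : Type*} [MeasurableSpace X] {P Q : Measure X}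

lemma aux_lintegral_inv_rnDeriv_le [IsFiniteMeasure P] [IsFiniteMeasure Q] (h : P ≪ Q) :
    ∫⁻ x, ENNReal.ofReal ((P.rnDeriv Q x).toReal)⁻¹ ∂P ≤ Q Set.univ := by
  have h1 : ∫⁻ x, ENNReal.ofReal ((P.rnDeriv Q x).toReal)⁻¹ ∂P
      = ∫⁻ x, (P.rnDeriv Q * fun x => ENNReal.ofReal ((P.rnDeriv Q x).toReal)⁻¹) x ∂Q := by
    rw [← lintegral_withDensity_eq_lintegral_mul _ (Measure.measurable_rnDeriv P Q)
      (g := fun x => ENNReal.ofReal ((P.rnDeriv Q x).toReal)⁻¹)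
      (Measure.measurable_rnDeriv P Q).ennreal_toReal.inv.ennreal_ofReal,
      Measure.withDensity_rnDeriv_eq P Q h]
  rw [h1]
  calc ∫⁻ x, (P.rnDeriv Q * fun x => ENNReal.ofReal ((P.rnDeriv Q x).toReal)⁻¹) x ∂Q
      ≤ ∫⁻ _, 1 ∂Q := by
        refine lintegral_mono_ae ?_
        filter_upwards [Measure.rnDeriv_lt_top P Q] with x hx
        simp only [Pi.mul_apply]
        by_cases h0 : P.rnDeriv Q x = 0
        · simp [h0]
        · have hr : P.rnDeriv Q x = ENNReal.ofReal (P.rnDeriv Q x).toReal :=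
            (ENNReal.ofReal_toReal hx.ne).symm
          nth_rewrite 1 [hr]
          rw [← ENNReal.ofReal_mul ENNReal.toReal_nonneg,
            mul_inv_cancel₀ (ENNReal.toReal_ne_zero.mpr ⟨h0, hx.ne⟩), ENNReal.ofReal_one]
    _ = Q Set.univ := by simp

lemma aux_integrable_inv_rnDeriv [IsFiniteMeasure P] [IsFiniteMeasure Q] (h : P ≪ Q) :
    Integrable (fun x => ((P.rnDeriv Q x).toReal)⁻¹) P := by
  refine ⟨(Measure.measurable_rnDeriv P Q).ennreal_toReal.inv.aestronglyMeasurable, ?_⟩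
  rw [hasFiniteIntegral_iff_ofReal
    (Filter.Eventually.of_forall fun x => inv_nonneg.mpr ENNReal.toReal_nonneg)]
  exact lt_of_le_of_lt (aux_lintegral_inv_rnDeriv_le h) (measure_lt_top Q _)

lemma aux_integrable_neg_llr [IsFiniteMeasure P] [IsFiniteMeasure Q] (h : P ≪ Q) :
    Integrable (fun x => max (- llr P Q x) 0) P := by
  refine Integrable.mono (aux_integrable_inv_rnDeriv h)
    (((measurable_llr P Q).neg.max measurable_const).aestronglyMeasurable) ?_
  filter_upwards [Measure.rnDeriv_pos h, h.ae_le (Measure.rnDeriv_lt_top P Q)] with x h0 htop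
  have hrt : 0 < (P.rnDeriv Q x).toReal := ENNReal.toReal_pos h0.ne' htop.ne
  rw [Real.norm_eq_abs, Real.norm_eq_abs, abs_of_nonneg (le_max_right _ _),
    abs_of_nonneg (inv_nonneg.mpr hrt.le), max_le_iff]
  have hlog := Real.log_le_sub_one_of_pos (inv_pos.mpr hrt)
  rw [Real.log_inv] at hlog
  constructor
  · simp only [llr]; linarith
  · positivity

lemma aux_integral_llr_nonneg [IsProbabilityMeasure P] [IsProbabilityMeasure Q] (h : P ≪ Q)
    (hi : Integrable (llr P Q) P) : 0 ≤ ∫ x, llr P Q x ∂P := by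
  have hint : Integrable (fun x => 1 - ((P.rnDeriv Q x).toReal)⁻¹) P :=
    (integrable_const 1).sub (aux_integrable_inv_rnDeriv h)
  have hle : ∀ᵐ x ∂P, 1 - ((P.rnDeriv Q x).toReal)⁻¹ ≤ llr P Q x := by
    filter_upwards [Measure.rnDeriv_pos h, h.ae_le (Measure.rnDeriv_lt_top P Q)] with x h0 htop
    have hrt : 0 < (P.rnDeriv Q x).toReal := ENNReal.toReal_pos h0.ne' htop.ne
    have hlog := Real.log_le_sub_one_of_pos (inv_pos.mpr hrt)
    rw [Real.log_inv] at hlog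
    simp only [llr]; linarith
  have h1 : ∫ x, (1 - ((P.rnDeriv Q x).toReal)⁻¹) ∂P ≤ ∫ x, llr P Q x ∂P :=
    integral_mono_ae hint hi hle
  have h2 : ∫ x, ((P.rnDeriv Q x).toReal)⁻¹ ∂P ≤ 1 := by
    rw [integral_eq_lintegral_of_nonneg_ae
      (Filter.Eventually.of_forall fun x => inv_nonneg.mpr ENNReal.toReal_nonneg)
      (Measure.measurable_rnDeriv P Q).ennreal_toReal.inv.aestronglyMeasurable]
    calc (∫⁻ x, ENNReal.ofReal ((P.rnDeriv Q x).toReal)⁻¹ ∂P).toReal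
        ≤ (Q Set.univ).toReal :=
          ENNReal.toReal_mono (measure_ne_top Q _) (aux_lintegral_inv_rnDeriv_le h)
      _ = 1 := by simp
  rw [integral_sub (integrable_const 1) (aux_integrable_inv_rnDeriv h)] at h1
  simp only [integral_const, measure_univ, probReal_univ, smul_eq_mul, one_mul] at h1
  linarith

lemma klDiv'_ne_bot {X : Type*} [MeasurableSpace X] (P Q : Measure X) : klDiv' P Q ≠ ⊥ := by
  unfold klDiv'
  split_ifs
  · exact EReal.coe_ne_bot _
  · simp

end Aux

set_option maxHeartbeats 2000000 in
/-- Let `G : Θ → ℝⁿ` be measurable, `M` a probability measure, `α > 0`,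
and `ρy` a probability measure with `ρy ≪ G_#M`; write `q = dρy/d(G_#M)` and
`Z = ∫ (q ∘ G)^{1/(1+α)} dM` with `0 < Z < ∞`. Then the measure `ρ*` with
`dρ*/dM = Z⁻¹·(q ∘ G)^{1/(1+α)}` is a probability measure minimizing
`KL(G_#ρ‖ρy) + α·KL(ρ‖M)` over probability measures `ρ`. -/
theorem stmt_7 {Θ : Type*} [MeasurableSpace Θ] {n : ℕ}
    (G : Θ → EuclideanSpace ℝ (Fin n)) (hG : Measurable G)
    (M : Measure Θ) [IsProbabilityMeasure M]
    (α : ℝ) (hα : 0 < α)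
    (ρy : Measure (EuclideanSpace ℝ (Fin n))) [IsProbabilityMeasure ρy]
    (hac : ρy ≪ M.map G)
    (Z : ℝ≥0∞)
    (hZ : Z = ∫⁻ x, (ρy.rnDeriv (M.map G) (G x)) ^ (1 / (1 + α)) ∂M)
    (hZpos : 0 < Z) (hZfin : Z < ⊤)
    (ρstar : Measure Θ)
    (hρstar : ρstar = M.withDensity
      (fun x => Z⁻¹ * (ρy.rnDeriv (M.map G) (G x)) ^ (1 / (1 + α)))) :
    IsProbabilityMeasure ρstar ∧
    ∀ ρ : Measure Θ, IsProbabilityMeasure ρ →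
      klDiv' (ρstar.map G) ρy + (α : EReal) * klDiv' ρstar M ≤
        klDiv' (ρ.map G) ρy + (α : EReal) * klDiv' ρ M := by
  have hGm : AEMeasurable G M := hG.aemeasurable
  set μ : Measure (EuclideanSpace ℝ (Fin n)) := M.map G with hμdef
  haveI : IsProbabilityMeasure μ := Measure.isProbabilityMeasure_map hGm
  set q : EuclideanSpace ℝ (Fin n) → ℝ≥0∞ := ρy.rnDeriv μ with hqdef
  have hq : Measurable q := Measure.measurable_rnDeriv _ _
  have h1α : (0:ℝ) < 1 + α := by linarith
  set β : ℝ := 1 / (1 + α) with hβdef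
  have hβpos : 0 < β := by positivity
  have hβlt : β < 1 := by rw [hβdef, div_lt_one h1α]; linarith
  have hβα : β * (1 + α) = 1 := by rw [hβdef, div_mul_cancel₀ _ h1α.ne']
  set f : Θ → ℝ≥0∞ := fun x => Z⁻¹ * q (G x) ^ β with hfdef
  have hqG : Measurable fun x => q (G x) := hq.comp hG
  have hqGβ : Measurable fun x => q (G x) ^ β := hqG.pow_const β
  have hf : Measurable f := hqGβ.const_mul _
  have hZ' : Z = ∫⁻ x, q (G x) ^ β ∂M := hZ
  -- ρstar is a probability measure
  have hPρstar : IsProbabilityMeasure ρstar := by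
    constructor
    rw [hρstar, withDensity_apply _ MeasurableSet.univ, Measure.restrict_univ,
      lintegral_const_mul _ hqGβ, ← hZ']
    exact ENNReal.inv_mul_cancel hZpos.ne' hZfin.ne
  refine ⟨hPρstar, ?_⟩
  -- the pushforward of ρstar
  set w : EuclideanSpace ℝ (Fin n) → ℝ≥0∞ := fun y => Z⁻¹ * q y ^ β with hwdef
  have hw : Measurable w := (hq.pow_const β).const_mul _
  set νs : Measure (EuclideanSpace ℝ (Fin n)) := μ.withDensity w with hνsdef
  have hmapρstar : ρstar.map G = νs := by
    refine Measure.ext fun s hs => ?_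
    rw [Measure.map_apply hG hs, hρstar, withDensity_apply _ (hG hs), hνsdef,
      withDensity_apply _ hs, setLIntegral_map hs hw hG]
  haveI : IsProbabilityMeasure νs := by
    rw [← hmapρstar]; exact Measure.isProbabilityMeasure_map hG.aemeasurable
  have hρy_eq : ρy = μ.withDensity q := by
    haveI : IsProbabilityMeasure μ := Measure.isProbabilityMeasure_map hGm
    haveI : ρy.HaveLebesgueDecomposition μ := Measure.haveLebesgueDecomposition_of_sigmaFinite ρy μ
    exact (Measure.withDensity_rnDeriv_eq ρy μ hac).symm
  have hqfin : ∀ᵐ y ∂μ, q y < ∞ := Measure.rnDeriv_lt_top ρy μ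
  have hqfinM : ∀ᵐ x ∂M, q (G x) < ∞ := (ae_map_iff hGm (hq measurableSet_Iio)).mp hqfin
  -- νs and ρy are mutually absolutely continuous
  set g : EuclideanSpace ℝ (Fin n) → ℝ≥0∞ :=
    fun y => if q y = 0 then 0 else Z⁻¹ * q y ^ (β - 1) with hgdef
  have hg : Measurable g := Measurable.ite (hq (measurableSet_singleton 0)) measurable_const
    ((hq.pow_const _).const_mul _)
  have hgν : ρy.withDensity g = νs := by
    rw [hρy_eq, ← withDensity_mul _ hq hg]
    refine withDensity_congr_ae ?_
    filter_upwards [hqfin] with y hy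
    by_cases h0 : q y = 0
    · simp [h0, hwdef, ENNReal.zero_rpow_of_pos hβpos]
    · simp only [Pi.mul_apply, hgdef, hwdef, if_neg h0]
      calc q y * (Z⁻¹ * q y ^ (β - 1)) = Z⁻¹ * (q y ^ (β - 1) * q y ^ (1:ℝ)) := by
            rw [ENNReal.rpow_one]; ring
        _ = Z⁻¹ * q y ^ β := by rw [← ENNReal.rpow_add _ _ h0 hy.ne]; norm_num
  have hνsρy : νs ≪ ρy := hgν ▸ withDensity_absolutelyContinuous ρy g
  have hρyνs : ρy ≪ νs := by
    set g' : EuclideanSpace ℝ (Fin n) → ℝ≥0∞ :=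
      fun y => if q y = 0 then 0 else Z * q y ^ (1 - β) with hg'def
    have hg' : Measurable g' := Measurable.ite (hq (measurableSet_singleton 0)) measurable_const
      ((hq.pow_const _).const_mul _)
    have : νs.withDensity g' = ρy := by
      rw [hνsdef, ← withDensity_mul _ hw hg', hρy_eq]
      refine withDensity_congr_ae ?_
      filter_upwards [hqfin] with y hy
      by_cases h0 : q y = 0
      · simp [h0, hwdef, hg'def]
      · simp only [Pi.mul_apply, hg'def, hwdef, if_neg h0]
        calc (Z⁻¹ * q y ^ β) * (Z * q y ^ (1 - β))
            = (Z⁻¹ * Z) * (q y ^ β * q y ^ (1 - β)) := by ring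
          _ = q y := by
              rw [ENNReal.inv_mul_cancel hZpos.ne' hZfin.ne, ← ENNReal.rpow_add _ _ h0 hy.ne]
              norm_num
    exact this ▸ withDensity_absolutelyContinuous νs g'
  have hνsμ : νs ≪ μ := hνsρy.trans hac
  have hρstarM : ρstar ≪ M := hρstar ▸ withDensity_absolutelyContinuous M f
  -- null sets where q vanishes
  have hq0meas : MeasurableSet {y | q y = 0} := hq (measurableSet_singleton 0)
  have hq0 : ρy {y | q y = 0} = 0 := by
    rw [hρy_eq, withDensity_apply _ hq0meas,
      setLIntegral_congr_fun hq0meas (fun y hy => hy)]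
    simp
  set Zr : ℝ := Z.toReal with hZrdef
  have hZr : 0 < Zr := ENNReal.toReal_pos hZpos.ne' hZfin.ne
  have hZinv_toReal : (Z⁻¹).toReal = Zr⁻¹ := by rw [ENNReal.toReal_inv]
  set L : EuclideanSpace ℝ (Fin n) → ℝ := fun y => log (q y).toReal with hLdef
  have hLmeas : Measurable L := hq.ennreal_toReal.log
  -- rnDeriv identities
  have hrρstar : ρstar.rnDeriv M =ᵐ[M] f := hρstar ▸ Measure.rnDeriv_withDensity M hf
  have hrνs : νs.rnDeriv ρy =ᵐ[ρy] g := by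
    rw [← hgν]; exact Measure.rnDeriv_withDensity ρy hg
  -- q is positive a.e. w.r.t. νs, and finite
  have hνs_q0 : νs {y | q y = 0} = 0 := hνsρy hq0
  have hνs_pos : ∀ᵐ y ∂νs, q y ≠ 0 := by
    rw [ae_iff]
    convert hνs_q0 using 2
    simp
  have hνs_fin : ∀ᵐ y ∂νs, q y < ∞ := hνsμ.ae_le hqfin
  -- the log of the density g
  have hlog_g : ∀ y, q y ≠ 0 → q y < ∞ → log (g y).toReal = (β - 1) * L y - log Zr := by
    intro y h0 hT
    have hqr : 0 < (q y).toReal := ENNReal.toReal_pos h0 hT.ne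
    rw [hgdef]
    simp only [if_neg h0]
    rw [ENNReal.toReal_mul, ← ENNReal.toReal_rpow,
      Real.log_mul (by rw [hZinv_toReal]; positivity) (by positivity),
      hZinv_toReal, Real.log_inv, Real.log_rpow hqr]
    ring
  have hlog_f : ∀ x, q (G x) ≠ 0 → q (G x) < ∞ →
      log (f x).toReal = β * L (G x) - log Zr := by
    intro x h0 hT
    have hqr : 0 < (q (G x)).toReal := ENNReal.toReal_pos h0 hT.ne
    rw [hfdef]
    simp only
    rw [ENNReal.toReal_mul, ← ENNReal.toReal_rpow,
      Real.log_mul (by rw [hZinv_toReal]; positivity) (by positivity),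
      hZinv_toReal, Real.log_inv, Real.log_rpow hqr]
    ring
  -- llr identity for νs w.r.t. ρy
  have hllr_νs : llr νs ρy =ᵐ[νs] fun y => (β - 1) * L y - log Zr := by
    filter_upwards [hνsρy.ae_le hrνs, hνs_pos, hνs_fin] with y hy h0 hT
    rw [llr, hy, hlog_g y h0 hT]
  -- q positive a.e. ρstar
  have hq0measΘ : MeasurableSet {x | q (G x) = 0} := hqG (measurableSet_singleton 0)
  have hρstar_q0 : ρstar {x | q (G x) = 0} = 0 := by
    rw [hρstar, withDensity_apply _ hq0measΘ]
    rw [setLIntegral_congr_fun hq0measΘ (fun x hx => by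
      show f x = 0
      rw [hfdef]
      simp only
      rw [show q (G x) = 0 from hx, ENNReal.zero_rpow_of_pos hβpos, mul_zero])]
    simp
  have hρstar_pos : ∀ᵐ x ∂ρstar, q (G x) ≠ 0 := by
    rw [ae_iff]
    convert hρstar_q0 using 2
    simp
  have hρstar_fin : ∀ᵐ x ∂ρstar, q (G x) < ∞ := hρstarM.ae_le hqfinM
  have hllr_ρstar : llr ρstar M =ᵐ[ρstar] fun x => β * L (G x) - log Zr := by
    filter_upwards [hρstarM.ae_le hrρstar, hρstar_pos, hρstar_fin] with x hx h0 hT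
    rw [llr, hx, hlog_f x h0 hT]
  -- integrability of L with respect to νs
  set γ : ℝ := (1 + β)/2 with hγdef
  have hγβ : 0 < γ - β := by rw [hγdef]; linarith
  have hγ1 : γ < 1 := by rw [hγdef]; linarith
  have hγpos : 0 < γ := by rw [hγdef]; linarith
  have hreal : ∀ s : ℝ, 0 < s → s ^ β * |log s| ≤ 2/β + (γ - β)⁻¹ * s ^ γ := by
    intro s hs
    have hsβ : 0 < s ^ β := Real.rpow_pos_of_pos hs β
    have hsγ : 0 < s ^ γ := Real.rpow_pos_of_pos hs γ
    rcases le_or_gt 1 s with h1 | h1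
    · rw [abs_of_nonneg (Real.log_nonneg h1)]
      have hd := Real.log_le_sub_one_of_pos (Real.rpow_pos_of_pos hs (γ - β))
      rw [Real.log_rpow hs] at hd
      have hmul : s ^ β * s ^ (γ - β) = s ^ γ := by
        rw [← Real.rpow_add hs]; ring_nf
      have key := mul_le_mul_of_nonneg_left hd hsβ.le
      have h2 : s ^ β * Real.log s ≤ (γ - β)⁻¹ * s ^ γ := by
        rw [inv_mul_eq_div, le_div_iff₀ hγβ]
        nlinarith [key, hmul, hsβ]
      have hb : (0:ℝ) ≤ 2/β := by positivity
      linarith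
    · rw [abs_of_nonpos (Real.log_nonpos hs.le h1.le)]
      have hinv : 0 < s⁻¹ := inv_pos.mpr hs
      have hd := Real.log_le_sub_one_of_pos (Real.rpow_pos_of_pos hinv (β/2))
      rw [Real.log_rpow hinv, Real.log_inv] at hd
      have hinvr : s⁻¹ ^ (β/2) = s ^ (-(β/2)) := by
        rw [Real.inv_rpow hs.le, ← Real.rpow_neg hs.le]
      rw [hinvr] at hd
      have key := mul_le_mul_of_nonneg_left hd hsβ.le
      have hss : s ^ β * s ^ (-(β/2)) = s ^ (β/2) := by
        rw [← Real.rpow_add hs]; ring_nf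
      have hle1 : s ^ (β/2) ≤ 1 := Real.rpow_le_one hs.le h1.le (by positivity)
      have hgoal1 : s ^ β * -log s ≤ 2/β := by
        rw [le_div_iff₀ hβpos]
        nlinarith [key, hss, hle1, hsβ]
      have hnn : (0:ℝ) ≤ (γ - β)⁻¹ * s ^ γ := by positivity
      linarith
  have hbound : ∀ t : ℝ≥0∞, t < ∞ →
      t ^ β * ENNReal.ofReal |log t.toReal| ≤
        ENNReal.ofReal (2/β) + ENNReal.ofReal ((γ - β)⁻¹) * t ^ γ := by
    intro t ht
    by_cases h0 : t = 0
    · simp [h0, ENNReal.zero_rpow_of_pos hβpos]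
    · have hs : 0 < t.toReal := ENNReal.toReal_pos h0 ht.ne
      have htt : t = ENNReal.ofReal t.toReal := (ENNReal.ofReal_toReal ht.ne).symm
      calc t ^ β * ENNReal.ofReal |log t.toReal|
          = ENNReal.ofReal (t.toReal ^ β * |log t.toReal|) := by
            nth_rewrite 1 [htt]
            rw [ENNReal.ofReal_rpow_of_pos hs, ← ENNReal.ofReal_mul (by positivity)]
        _ ≤ ENNReal.ofReal (2/β + (γ - β)⁻¹ * t.toReal ^ γ) :=
            ENNReal.ofReal_le_ofReal (hreal _ hs)
        _ = ENNReal.ofReal (2/β) + ENNReal.ofReal ((γ - β)⁻¹) * t ^ γ := by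
            rw [ENNReal.ofReal_add (by positivity) (by positivity),
              ENNReal.ofReal_mul (by positivity)]
            congr 1
            nth_rewrite 2 [htt]
            rw [ENNReal.ofReal_rpow_of_pos hs]
  have hqγ : ∫⁻ y, q y ^ γ ∂μ < ∞ := by
    calc ∫⁻ y, q y ^ γ ∂μ ≤ ∫⁻ y, (1 + q y) ∂μ := by
          refine lintegral_mono fun y => ?_
          rcases le_total (q y) 1 with h | h
          · exact (ENNReal.rpow_le_one h hγpos.le).trans le_self_add
          · exact ((ENNReal.rpow_le_rpow_of_exponent_le h hγ1.le).trans_eq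
              (ENNReal.rpow_one _)).trans le_add_self
      _ = 1 + ∫⁻ y, q y ∂μ := by
          rw [lintegral_add_left measurable_const, lintegral_const, one_mul, measure_univ]
      _ < ∞ := ENNReal.add_lt_top.mpr ⟨ENNReal.one_lt_top, Measure.lintegral_rnDeriv_lt_top ρy μ⟩
  have hLabs : ∫⁻ y, ENNReal.ofReal |L y| ∂νs < ∞ := by
    have heq : ∫⁻ y, ENNReal.ofReal |L y| ∂νs
        = ∫⁻ y, (w * fun y => ENNReal.ofReal |L y|) y ∂μ := by
      rw [hνsdef, lintegral_withDensity_eq_lintegral_mul _ hw hLmeas.abs.ennreal_ofReal]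
    rw [heq]
    calc ∫⁻ y, (w * fun y => ENNReal.ofReal |L y|) y ∂μ
        ≤ ∫⁻ y, Z⁻¹ * (ENNReal.ofReal (2/β) + ENNReal.ofReal ((γ - β)⁻¹) * q y ^ γ) ∂μ := by
          refine lintegral_mono_ae ?_
          filter_upwards [hqfin] with y hy
          simp only [Pi.mul_apply, hwdef]
          rw [mul_assoc]
          gcongr
          exact hbound (q y) hy
      _ < ∞ := by
          rw [lintegral_const_mul (f := fun y =>
              ENNReal.ofReal (2/β) + ENNReal.ofReal ((γ - β)⁻¹) * q y ^ γ) _ ((measurable_const.add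
            ((hq.pow_const γ).const_mul _)) : Measurable fun y =>
              ENNReal.ofReal (2/β) + ENNReal.ofReal ((γ - β)⁻¹) * q y ^ γ),
            lintegral_add_left measurable_const, lintegral_const, measure_univ, mul_one,
            lintegral_const_mul _ (hq.pow_const γ)]
          exact ENNReal.mul_lt_top (ENNReal.inv_lt_top.mpr hZpos)
            (ENNReal.add_lt_top.mpr ⟨ENNReal.ofReal_lt_top,
              ENNReal.mul_lt_top ENNReal.ofReal_lt_top hqγ⟩)
  have hLint : Integrable L νs := by
    refine ⟨hLmeas.aestronglyMeasurable, ?_⟩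
    rw [hasFiniteIntegral_iff_norm]
    simpa only [Real.norm_eq_abs] using hLabs
  -- value of the KL divergences at the minimizer
  set I : ℝ := ∫ y, L y ∂νs with hIdef
  have hLint' : Integrable L (Measure.map G ρstar) := by rw [hmapρstar]; exact hLint
  have hℓint : Integrable (fun x => L (G x)) ρstar :=
    (integrable_map_measure hLint'.aestronglyMeasurable hG.aemeasurable).mp hLint'
  have hI : ∫ x, L (G x) ∂ρstar = I := by
    rw [hIdef, ← hmapρstar, integral_map hG.aemeasurable hLint'.aestronglyMeasurable]
  have hint_ρstar : Integrable (llr ρstar M) ρstar :=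
    (integrable_congr hllr_ρstar.symm).mp ((hℓint.const_mul β).sub (integrable_const _))
  have hval_ρstar : ∫ x, llr ρstar M x ∂ρstar = β * I - log Zr := by
    rw [integral_congr_ae hllr_ρstar,
      integral_sub (hℓint.const_mul β) (integrable_const _), integral_const_mul, hI,
      integral_const]
    simp [measure_univ]
  have hint_νs : Integrable (llr νs ρy) νs :=
    (integrable_congr hllr_νs.symm).mp ((hLint.const_mul _).sub (integrable_const _))
  have hval_νs : ∫ y, llr νs ρy y ∂νs = (β - 1) * I - log Zr := by
    rw [integral_congr_ae hllr_νs,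
      integral_sub (hLint.const_mul _) (integrable_const _), integral_const_mul,
      integral_const]
    simp [measure_univ, hIdef]
  have hkl1 : klDiv' ρstar M = ((β * I - log Zr : ℝ) : EReal) := by
    unfold klDiv'
    rw [if_pos ⟨hρstarM, hint_ρstar⟩]
    exact congrArg _ hval_ρstar
  have hkl2 : klDiv' (ρstar.map G) ρy = (((β - 1) * I - log Zr : ℝ) : EReal) := by
    unfold klDiv'
    rw [hmapρstar, if_pos ⟨hνsρy, hint_νs⟩]
    exact congrArg _ hval_νs
  have hc0 : (β - 1) + α * β = 0 := by linear_combination hβα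
  have hLHS : klDiv' (ρstar.map G) ρy + (α : EReal) * klDiv' ρstar M
      = ((-(1 + α) * log Zr : ℝ) : EReal) := by
    rw [hkl2, hkl1, ← EReal.coe_mul, ← EReal.coe_add]
    congr 1
    linear_combination I * hc0
  intro ρ hρP
  rw [hLHS]
  by_cases hc1 : (ρ.map G) ≪ ρy ∧ Integrable (llr (ρ.map G) ρy) (ρ.map G)
  swap
  · have h1 : klDiv' (ρ.map G) ρy = ⊤ := by
      unfold klDiv'
      split_ifs with h
      · exact absurd h hc1
      · rfl
    rw [h1]
    have hne : (α : EReal) * klDiv' ρ M ≠ ⊥ := by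
      unfold klDiv'
      split_ifs
      · rw [← EReal.coe_mul]; exact EReal.coe_ne_bot _
      · rw [EReal.coe_mul_top_of_pos hα]; simp
    rw [EReal.top_add_of_ne_bot hne]
    exact le_top
  by_cases hc2 : ρ ≪ M ∧ Integrable (llr ρ M) ρ
  swap
  · have h2 : klDiv' ρ M = ⊤ := by
      unfold klDiv'
      split_ifs with h
      · exact absurd h hc2
      · rfl
    rw [h2, EReal.coe_mul_top_of_pos hα, EReal.add_top_of_ne_bot (klDiv'_ne_bot _ _)]
    exact le_top
  obtain ⟨hν1, hν2⟩ := hc1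
  obtain ⟨hρ1, hρ2⟩ := hc2
  have hkey : -(1 + α) * log Zr ≤
      (∫ y, llr (ρ.map G) ρy y ∂(ρ.map G)) + α * ∫ x, llr ρ M x ∂ρ := by
    set ν : Measure (EuclideanSpace ℝ (Fin n)) := ρ.map G with hνdef
    have hGρ : AEMeasurable G ρ := hG.aemeasurable
    haveI : IsProbabilityMeasure ν := Measure.isProbabilityMeasure_map hGρ
    have hννs : ν ≪ νs := hν1.trans hρyνs
    have hνμ : ν ≪ μ := hν1.trans hac
    have hν_q0 : ∀ᵐ y ∂ν, q y ≠ 0 := by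
      rw [ae_iff]
      convert hν1 hq0 using 2
      simp
    have hν_fin : ∀ᵐ y ∂ν, q y < ∞ := hνμ.ae_le hqfin
    have hρ_q0 : ρ {x | q (G x) = 0} = 0 := by
      have heq : ρ {x | q (G x) = 0} = ν {y | q y = 0} := by
        rw [hνdef, Measure.map_apply hG hq0meas]; rfl
      rw [heq]
      exact hν1 hq0
    have hρ_q0ae : ∀ᵐ x ∂ρ, q (G x) ≠ 0 := by
      rw [ae_iff]; convert hρ_q0 using 2; simp
    have hρρstar : ρ ≪ ρstar := by
      refine Measure.AbsolutelyContinuous.mk fun s hs hs0 => ?_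
      rw [hρstar, withDensity_apply _ hs] at hs0
      have hf0 : ∀ᵐ x ∂M, x ∈ s → f x = 0 :=
        (ae_restrict_iff' hs).mp ((lintegral_eq_zero_iff hf).mp hs0)
      have hq0' : ∀ᵐ x ∂ρ, x ∈ s → q (G x) = 0 := by
        filter_upwards [hρ1.ae_le hf0] with x hx hxs
        have hx0 := hx hxs
        rw [hfdef] at hx0
        simp only at hx0
        rcases mul_eq_zero.mp hx0 with h | h
        · exact absurd h (ENNReal.inv_ne_zero.mpr hZfin.ne)
        · rcases ENNReal.rpow_eq_zero_iff.mp h with ⟨h', _⟩ | ⟨h', hneg⟩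
          · exact h'
          · linarith
      refine measure_eq_zero_iff_ae_notMem.mpr ?_
      filter_upwards [hq0', hρ_q0ae] with x h1 h2
      intro hxs
      exact h2 (h1 hxs)
    -- chain rule identities
    have hchain_ρ : llr ρ M =ᵐ[ρ] fun x => llr ρ ρstar x + (β * L (G x) - log Zr) := by
      have h1 := Measure.rnDeriv_mul_rnDeriv hρρstar (κ := M)
      filter_upwards [hρ1.ae_le h1, Measure.rnDeriv_pos hρρstar,
        hρρstar.ae_le (Measure.rnDeriv_lt_top ρ ρstar), hρ1.ae_le hrρstar,
        hρ_q0ae, hρ1.ae_le hqfinM] with x hx hp hfin hfx h0 hT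
      simp only [llr_def]
      rw [← hx, Pi.mul_apply, hfx, ENNReal.toReal_mul, Real.log_mul, hlog_f x h0 hT]
      · exact ENNReal.toReal_ne_zero.mpr ⟨hp.ne', hfin.ne⟩
      · rw [hfdef]
        simp only
        rw [ENNReal.toReal_mul, ← ENNReal.toReal_rpow, hZinv_toReal]
        have hqr : 0 < (q (G x)).toReal := ENNReal.toReal_pos h0 hT.ne
        positivity
    have hchain_ν : llr ν ρy =ᵐ[ν] fun y => llr ν νs y + ((β - 1) * L y - log Zr) := by
      have h1 := Measure.rnDeriv_mul_rnDeriv hννs (κ := ρy)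
      filter_upwards [hν1.ae_le h1, Measure.rnDeriv_pos hννs,
        hννs.ae_le (Measure.rnDeriv_lt_top ν νs), hν1.ae_le hrνs, hν_q0, hν_fin]
        with y hy hp hfin hgy h0 hT
      simp only [llr_def]
      rw [← hy, Pi.mul_apply, hgy, ENNReal.toReal_mul, Real.log_mul, hlog_g y h0 hT]
      · exact ENNReal.toReal_ne_zero.mpr ⟨hp.ne', hfin.ne⟩
      · rw [hgdef]
        simp only [if_neg h0]
        rw [ENNReal.toReal_mul, ← ENNReal.toReal_rpow, hZinv_toReal]
        have hqr : 0 < (q y).toReal := ENNReal.toReal_pos h0 hT.ne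
        positivity
    have hmeasset : MeasurableSet
        {y | llr ν ρy y = llr ν νs y + ((β - 1) * L y - log Zr)} :=
      measurableSet_eq_fun (measurable_llr _ _)
        ((measurable_llr _ _).add ((hLmeas.const_mul _).sub measurable_const))
    have hchain_νρ : ∀ᵐ x ∂ρ,
        llr ν ρy (G x) = llr ν νs (G x) + ((β - 1) * L (G x) - log Zr) := by
      refine (ae_map_iff hGρ hmeasset).mp ?_
      filter_upwards [hchain_ν] with y hy using hy
    set A : Θ → ℝ := fun x => llr ν νs (G x) with hAdef
    set B : Θ → ℝ := llr ρ ρstar with hBdef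
    have hsum : (fun x => llr ν ρy (G x) + α * llr ρ M x)
        =ᵐ[ρ] fun x => A x + α * B x - (1 + α) * log Zr := by
      filter_upwards [hchain_νρ, hchain_ρ] with x h1 h2
      rw [h1, h2]
      simp only [hAdef, hBdef]
      linear_combination (L (G x)) * hc0
    have hν2' : Integrable (fun x => llr ν ρy (G x)) ρ :=
      (integrable_map_measure (measurable_llr _ _).aestronglyMeasurable hGρ).mp hν2
    have hABc : Integrable (fun x => A x + α * B x - (1 + α) * log Zr) ρ :=
      (integrable_congr hsum).mp (hν2'.add (hρ2.const_mul α))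
    have hAB : Integrable (fun x => A x + α * B x) ρ := by
      have h := hABc.add (integrable_const ((1 + α) * log Zr))
      exact h.congr (Filter.Eventually.of_forall fun x => by simp only [Pi.add_apply]; ring)
    have hAmeas : Measurable A := (measurable_llr _ _).comp hG
    have hBmeas : Measurable B := measurable_llr _ _
    have hAneg : Integrable (fun x => max (- A x) 0) ρ := by
      have h0 : Integrable (fun y => max (- llr ν νs y) 0) ν := aux_integrable_neg_llr hννs
      exact (integrable_map_measure
        (((measurable_llr _ _).neg.max measurable_const).aestronglyMeasurable) hGρ).mp h0
    have hBneg : Integrable (fun x => max (- B x) 0) ρ := aux_integrable_neg_llr hρρstar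
    have hmaxid : ∀ a : ℝ, max a 0 - max (-a) 0 = a := by
      intro a
      rcases le_total a 0 with h | h
      · rw [max_eq_right h, max_eq_left (neg_nonneg.mpr h)]; ring
      · rw [max_eq_left h, max_eq_right (neg_nonpos.mpr h)]; ring
    have hAint : Integrable A ρ := by
      have hApos : Integrable (fun x => max (A x) 0) ρ := by
        refine Integrable.mono (hAB.pos_part.add (hBneg.const_mul α))
          ((hAmeas.max measurable_const).aestronglyMeasurable)
          (Filter.Eventually.of_forall fun x => ?_)
        have h2 : (0:ℝ) ≤ α * max (- B x) 0 := mul_nonneg hα.le (le_max_right _ _)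
        have h1 : (0:ℝ) ≤ max (A x + α * B x) 0 := le_max_right _ _
        simp only [Real.norm_eq_abs, Pi.add_apply]
        rw [abs_of_nonneg (le_max_right _ _), abs_of_nonneg (by linarith)]
        rcases le_total (A x) 0 with h | h
        · rw [max_eq_right h]; linarith
        · rw [max_eq_left h]
          have h3 : A x + α * B x ≤ max (A x + α * B x) 0 := le_max_left _ _
          have h4 : α * (- B x) ≤ α * max (- B x) 0 :=
            mul_le_mul_of_nonneg_left (le_max_left _ _) hα.le
          linarith
      exact ((hApos.sub hAneg).congr (Filter.Eventually.of_forall fun x => hmaxid (A x)))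
    have hBint : Integrable B ρ := by
      have hBpos : Integrable (fun x => max (B x) 0) ρ := by
        refine Integrable.mono ((hAB.pos_part.add hAneg).const_mul α⁻¹)
          ((hBmeas.max measurable_const).aestronglyMeasurable)
          (Filter.Eventually.of_forall fun x => ?_)
        have h1 : (0:ℝ) ≤ max (A x + α * B x) 0 := le_max_right _ _
        have h2 : (0:ℝ) ≤ max (- A x) 0 := le_max_right _ _
        have hS : α * max (B x) 0 ≤ max (A x + α * B x) 0 + max (- A x) 0 := by
          rcases le_total (B x) 0 with h | h
          · rw [max_eq_right h]; simp; linarith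
          · rw [max_eq_left h]
            have h3 : A x + α * B x ≤ max (A x + α * B x) 0 := le_max_left _ _
            have h4 : - A x ≤ max (- A x) 0 := le_max_left _ _
            linarith
        simp only [Real.norm_eq_abs, Pi.add_apply]
        rw [abs_of_nonneg (le_max_right _ _), abs_of_nonneg (by positivity)]
        calc max (B x) 0 = α⁻¹ * (α * max (B x) 0) := by field_simp
          _ ≤ α⁻¹ * (max (A x + α * B x) 0 + max (- A x) 0) :=
              mul_le_mul_of_nonneg_left hS (inv_nonneg.mpr hα.le)
      exact ((hBpos.sub hBneg).congr (Filter.Eventually.of_forall fun x => hmaxid (B x)))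
    have hllrνint : Integrable (llr ν νs) ν :=
      (integrable_map_measure (measurable_llr _ _).aestronglyMeasurable hGρ).mpr hAint
    have hAnn : 0 ≤ ∫ x, A x ∂ρ := by
      have h0 := aux_integral_llr_nonneg hννs hllrνint
      rwa [hνdef, integral_map hGρ (measurable_llr _ _).aestronglyMeasurable] at h0
    have hBnn : 0 ≤ ∫ x, B x ∂ρ := aux_integral_llr_nonneg hρρstar hBint
    have hs1 : ∫ y, llr ν ρy y ∂ν = ∫ x, llr ν ρy (G x) ∂ρ := by
      rw [hνdef, integral_map hGρ (measurable_llr _ _).aestronglyMeasurable]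
    calc -(1 + α) * log Zr
        ≤ (∫ x, A x ∂ρ) + α * (∫ x, B x ∂ρ) - (1 + α) * log Zr := by
          have := mul_nonneg hα.le hBnn
          linarith
      _ = ∫ x, (A x + α * B x - (1 + α) * log Zr) ∂ρ := by
          rw [integral_sub hAB (integrable_const _),
            integral_add hAint (hBint.const_mul α), integral_const_mul, integral_const]
          simp [measure_univ]
      _ = ∫ x, (llr ν ρy (G x) + α * llr ρ M x) ∂ρ := (integral_congr_ae hsum).symm
      _ = (∫ x, llr ν ρy (G x) ∂ρ) + α * ∫ x, llr ρ M x ∂ρ := by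
          rw [integral_add hν2' (hρ2.const_mul α), integral_const_mul]
      _ = (∫ y, llr ν ρy y ∂ν) + α * ∫ x, llr ρ M x ∂ρ := by rw [hs1]
  have h1 : klDiv' (ρ.map G) ρy = ((∫ y, llr (ρ.map G) ρy y ∂(ρ.map G) : ℝ) : EReal) := by
    unfold klDiv'
    split_ifs with h
    · rfl
    · exact absurd ⟨hν1, hν2⟩ h
  have h2 : klDiv' ρ M = ((∫ x, llr ρ M x ∂ρ : ℝ) : EReal) := by
    unfold klDiv'
    split_ifs with h
    · rfl
    · exact absurd ⟨hρ1, hρ2⟩ h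
  rw [h1, h2, ← EReal.coe_mul, ← EReal.coe_add]
  exact EReal.coe_le_coe_iff.mpr hkey
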